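/- Assume the Continuum Hypothesis, i.e., 2^{ℵ₀} = ℵ₁. If T is a subtree of ^{<ω₁}ω₁ that is an ω₁-Kurepa subtree, then the set [T] is not a continuous image of ^{ω₁}ω₁. -/

import Mathlib

open Cardinal Set

noncomputable section

namespace GBaire

universe u

/-- The underlying well-ordered set of the cardinal `κ`, i.e. the type of ordinals `< κ`. -/
abbrev K (κ : Cardinal.{u}) : Type u := κ.ord.ToType

/-- The set `^{<κ}κ` of all functions from a proper initial segment of `κ` to `κ`. -/
abbrev PreFun (κ : Cardinal.{u}) : Type u := Σ α : K κ, ({β : K κ // β < α} → K κ)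

variable (κ : Cardinal.{u})

/-- The restriction `x ↾ α` of a function `x ∈ ^κκ` to the initial segment determined by `α`. -/
def resT (x : K κ → K κ) (α : K κ) : PreFun κ := ⟨α, fun β => x β.1⟩

/-- The restriction of `s ∈ ^{<κ}κ` to (the minimum of its domain and) `γ`.  When
`γ ≤ s.1` this is the restriction `s ↾ γ`; otherwise it equals `s`. -/
def cut (s : PreFun κ) (γ : K κ) : PreFun κ :=
  ⟨min γ s.1, fun β => s.2 ⟨β.1, lt_of_lt_of_le β.2 (min_le_right _ _)⟩⟩

/-- A subtree of `^{<κ}κ`: a set of elements of `^{<κ}κ` closed under restrictions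
to smaller ordinals. -/
def IsSubtree (T : Set (PreFun κ)) : Prop :=
  ∀ s ∈ T, ∀ γ : K κ, γ < s.1 → cut κ s γ ∈ T

/-- The `α`-th level `T(α)` of `T`. -/
def level (T : Set (PreFun κ)) (α : K κ) : Set (PreFun κ) := {s ∈ T | s.1 = α}

/-- The set `[T]` of cofinal branches of `T`, i.e. all `x ∈ ^κκ` all of whose
restrictions lie in `T`. -/
def branches (T : Set (PreFun κ)) : Set (K κ → K κ) := {x | ∀ α : K κ, resT κ x α ∈ T}

/-- `T` is a `κ`-Kurepa subtree of `^{<κ}κ`: a subtree all of whose levels are nonempty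
of cardinality `< κ` and with at least `κ⁺` many cofinal branches. -/
def IsKurepa (T : Set (PreFun κ)) : Prop :=
  IsSubtree κ T ∧ (∀ α : K κ, (level κ T α).Nonempty ∧ #(level κ T α) < κ) ∧
    Order.succ κ ≤ #(branches κ T)

/-- The basic open set `N_s = {x ∈ ^κκ | s ⊆ x}`. -/
def Nbhd (s : PreFun κ) : Set (K κ → K κ) := {x | resT κ x s.1 = s}

/-- The topology of the generalized Baire space `^κκ`, generated by the sets `N_s`. -/
def baire : TopologicalSpace (K κ → K κ) :=
  TopologicalSpace.generateFrom {U | ∃ s : PreFun κ, U = Nbhd κ s}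

/-- `X` is a continuous image of `^κκ`: there is a continuous surjection from `^κκ`
onto `X` (with the subspace topology). -/
def IsContImage (X : Set (K κ → K κ)) : Prop :=
  letI := baire κ
  ∃ f : (K κ → K κ) → X, Continuous f ∧ Function.Surjective f

/-- `X` is a retract of `^κκ`: there is a continuous `r : ^κκ → ^κκ` with range
contained in `X` that is the identity on `X`. -/
def IsRetract (X : Set (K κ → K κ)) : Prop :=
  letI := baire κ
  ∃ r : (K κ → K κ) → (K κ → K κ),
    Continuous r ∧ Set.range r ⊆ X ∧ ∀ x ∈ X, r x = x

/-- `y` is an isolated point of `Y ⊆ ^κκ`. -/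
def IsIsolatedIn (Y : Set (K κ → K κ)) (y : K κ → K κ) : Prop :=
  y ∈ Y ∧ ∃ α : K κ, Nbhd κ (resT κ y α) ∩ Y = {y}

/-- `T` is slim: `|T(α)| ≤ |α|` for all sufficiently large `α < κ`. -/
def IsSlim (T : Set (PreFun κ)) : Prop :=
  ∃ α₀ : K κ, ∀ α : K κ, α₀ ≤ α → #(level κ T α) ≤ #{β : K κ // β < α}

/-- `C ⊆ κ` is closed: it contains every least upper bound of a nonempty subset of `C`. -/
def ClosedIn (C : Set (K κ)) : Prop :=
  ∀ A ⊆ C, A.Nonempty → ∀ x : K κ, IsLUB A x → x ∈ C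

/-- `C ⊆ κ` is unbounded in `κ`. -/
def UnboundedIn (C : Set (K κ)) : Prop := ∀ x : K κ, ∃ y ∈ C, x < y

/-- `S ⊆ κ` is stationary in `κ`: it meets every closed unbounded subset of `κ`. -/
def Stationary (S : Set (K κ)) : Prop :=
  ∀ C : Set (K κ), ClosedIn κ C → UnboundedIn κ C → (S ∩ C).Nonempty

/-- `T` is stationary slim: `|T(α)| ≤ |α|` for stationarily many `α < κ`. -/
def StatSlim (T : Set (PreFun κ)) : Prop :=
  Stationary κ {α : K κ | #(level κ T α) ≤ #{β : K κ // β < α}}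

/-- `α` is a limit ordinal (as an element of `κ`): it is neither the least element
nor a successor. -/
def IsLimitElt (α : K κ) : Prop :=
  (∃ β : K κ, β < α) ∧ ∀ β : K κ, β < α → ∃ γ : K κ, β < γ ∧ γ < α

/-- The boundary `∂T` of a subtree `T`: the minimal elements of `^{<κ}κ \ T`. -/
def boundary (T : Set (PreFun κ)) : Set (PreFun κ) :=
  {t | t ∉ T ∧ ∀ γ : K κ, γ < t.1 → cut κ t γ ∈ T}

/-- `T` is superthin: for every limit ordinal `α < κ`, the set of elements of
`T ∪ ∂T` with domain `α` has cardinality `< κ`. -/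
def IsSuperthin (T : Set (PreFun κ)) : Prop :=
  ∀ α : K κ, IsLimitElt κ α → #{s ∈ T ∪ boundary κ T | s.1 = α} < κ

/-- `T` is pruned: every element of `T` has a proper extension in `T`. -/
def IsPruned (T : Set (PreFun κ)) : Prop :=
  ∀ s ∈ T, ∃ t ∈ T, s.1 < t.1 ∧ cut κ t s.1 = s

/-- `T` is `<κ`-closed: the union of every (strictly increasing with respect to proper
end-extension) sequence of elements of `T` indexed by an ordinal `< κ` again lies in `T`.
Here `u` is the union of the sequence `s` iff the domain of `u` is the least upper bound
of the domains of the `s ξ` and every `s ξ` is a restriction of `u`. -/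
def IsLtClosed (T : Set (PreFun κ)) : Prop :=
  ∀ (γ : K κ) (s : {ξ : K κ // ξ < γ} → PreFun κ),
    (∀ ξ ζ : {ξ : K κ // ξ < γ}, ξ < ζ → (s ξ).1 < (s ζ).1 ∧ cut κ (s ζ) (s ξ).1 = s ξ) →
    (∀ ξ, s ξ ∈ T) →
    ∀ u : PreFun κ, IsLUB (Set.range fun ξ => (s ξ).1) u.1 →
      (∀ ξ, cut κ u (s ξ).1 = s ξ) → u ∈ T

/-- `T` contains a Cantor subtree. -/
def HasCantorSubtree (T : Set (PreFun κ)) : Prop :=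
  ∃ (l : ℕ → K κ) (lam : K κ), StrictMono l ∧ IsLUB (Set.range l) lam ∧
    (level κ T lam).Nonempty ∧
    ∃ B ⊆ level κ T lam, ¬ B.Countable ∧
      ∀ n : ℕ, ((fun t => cut κ t (l n)) '' B).Countable

/-- proper end-extension on `^{<κ}κ`. -/
def pext (s t : PreFun κ) : Prop := s.1 < t.1 ∧ cut κ t s.1 = s

/-- A set `A ⊆ ^{<κ}κ`, regarded as a tree under proper end-extension, is trivially
coherent: it is order-isomorphic to a subtree of `^{<λ}2` (for `λ` its height) all of
whose elements `t` satisfy that `t⁻¹{0}` is finite.  (Here the comparison tree is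
realized as a subtree `U` of `^{<κ}κ` taking only the values `0` and `1`, i.e. values
with at most one predecessor, such that each `u ∈ U` takes the value `0`, i.e. the
value with no predecessor, only finitely often.) -/
def TriviallyCoherent (A : Set (PreFun κ)) : Prop :=
  ∃ U : Set (PreFun κ),
    IsSubtree κ U ∧
    (∀ u ∈ U, ∀ β : {b : K κ // b < u.1}, #{γ : K κ // γ < u.2 β} ≤ 1) ∧
    (∀ u ∈ U, {β : {b : K κ // b < u.1} | ¬ ∃ γ : K κ, γ < u.2 β}.Finite) ∧
    ∃ f : A → U, Function.Bijective f ∧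
      ∀ s t : A, pext κ s.1 t.1 ↔ pext κ (f s).1 (f t).1

/-- `T` is locally coherent: each of its proper initial segments `T ∩ ^{<α}κ` is
trivially coherent. -/
def LocallyCoherent (T : Set (PreFun κ)) : Prop :=
  ∀ α : K κ, TriviallyCoherent κ {s ∈ T | s.1 < α}

end GBaire

namespace GBaire

section Helpers

variable {κ : Cardinal.{u}}

lemma prefun_ext {s t : PreFun κ} (h1 : s.1 = t.1)
    (h2 : ∀ (β : K κ) (hs : β < s.1) (ht : β < t.1), s.2 ⟨β, hs⟩ = t.2 ⟨β, ht⟩) : s = t := by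
  obtain ⟨a, g⟩ := s
  obtain ⟨b, g'⟩ := t
  dsimp at h1 h2
  subst h1
  exact congrArg (Sigma.mk a) (funext fun β => h2 β.1 β.2 β.2)

lemma cut_resT (y : K κ → K κ) {β γ : K κ} (h : β ≤ γ) :
    cut κ (resT κ y γ) β = resT κ y β := by
  apply prefun_ext
  · show min β γ = β
    exact min_eq_left h
  · intro δ hs ht
    rfl

lemma val_of_cut_eq {r s : PreFun κ} {γ : K κ} (e : cut κ r γ = s)
    {β : K κ} (hs : β < s.1) (hr : β < r.1) : s.2 ⟨β, hs⟩ = r.2 ⟨β, hr⟩ := by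
  subst e
  rfl

lemma cut_cut {r : PreFun κ} {β γ : K κ} (h : β ≤ γ) :
    cut κ (cut κ r γ) β = cut κ r β := by
  apply prefun_ext
  · show min β (min γ r.1) = min β r.1
    rw [← min_assoc, min_eq_left h]
  · intro δ hs ht
    rfl

lemma mem_Nbhd_resT (y : K κ → K κ) (γ : K κ) : y ∈ Nbhd κ (resT κ y γ) := rfl

lemma resT_mono {y z : K κ → K κ} {β γ : K κ} (h : β ≤ γ) (e : resT κ y γ = resT κ z γ) :
    resT κ y β = resT κ z β := by
  rw [← cut_resT y h, ← cut_resT z h, e]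

lemma Nbhd_anti (y : K κ → K κ) {β γ : K κ} (h : β ≤ γ) :
    Nbhd κ (resT κ y γ) ⊆ Nbhd κ (resT κ y β) := by
  intro z hz
  have hz' : resT κ z γ = resT κ y γ := hz
  show resT κ z β = resT κ y β
  exact resT_mono h hz'

lemma val_congr {s t : PreFun κ} (e : s = t) {β : K κ} (hs : β < s.1) (ht : β < t.1) :
    s.2 ⟨β, hs⟩ = t.2 ⟨β, ht⟩ := by
  subst e
  rfl

lemma resT_val_eq {y z : K κ → K κ} {γ β : K κ} (e : resT κ y γ = resT κ z γ) (h : β < γ) :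
    y β = z β :=
  val_congr e h h

/-- proper-or-improper end extension -/
def sleq (s r : PreFun κ) : Prop := s.1 ≤ r.1 ∧ cut κ r s.1 = s

lemma sleq_refl (s : PreFun κ) : sleq s s := by
  refine ⟨le_rfl, ?_⟩
  apply prefun_ext
  · show min s.1 s.1 = s.1
    exact min_self _
  · intro δ hs ht
    rfl

lemma sleq_trans {s r q : PreFun κ} (h1 : sleq s r) (h2 : sleq r q) : sleq s q := by
  refine ⟨h1.1.trans h2.1, ?_⟩
  rw [← cut_cut (r := q) h1.1, h2.2]
  exact h1.2

lemma Nbhd_sleq {s r : PreFun κ} (h : sleq s r) : Nbhd κ r ⊆ Nbhd κ s := by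
  intro z hz
  have hz' : resT κ z r.1 = r := hz
  show resT κ z s.1 = s
  rw [← cut_resT z h.1, hz', h.2]

lemma sleq_resT {y : K κ → K κ} {s : PreFun κ} (hy : y ∈ Nbhd κ s) {γ : K κ} (h : s.1 ≤ γ) :
    sleq s (resT κ y γ) := by
  refine ⟨h, ?_⟩
  rw [cut_resT y h]
  exact hy

lemma cut_eq_of_mem {b : K κ → K κ} {t t' : PreFun κ} (h : b ∈ Nbhd κ t) (h' : b ∈ Nbhd κ t')
    (hle : t.1 ≤ t'.1) : cut κ t' t.1 = t := by
  have h1 : resT κ b t.1 = t := h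
  have h2 : resT κ b t'.1 = t' := h'
  rw [← h2, cut_resT b hle, h1]

lemma isOpen_Nbhd (s : PreFun κ) : @IsOpen _ (baire κ) (Nbhd κ s) :=
  TopologicalSpace.isOpen_generateFrom_of_mem ⟨s, rfl⟩

lemma isBasis_Nbhd (hne : Nonempty (K κ)) :
    @TopologicalSpace.IsTopologicalBasis (K κ → K κ) (baire κ) {U | ∃ s : PreFun κ, U = Nbhd κ s} := by
  letI : TopologicalSpace (K κ → K κ) := baire κ
  refine ⟨?_, ?_, rfl⟩
  · rintro U1 ⟨s1, rfl⟩ U2 ⟨s2, rfl⟩ x ⟨hx1, hx2⟩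
    have h1 : resT κ x s1.1 = s1 := hx1
    have h2 : resT κ x s2.1 = s2 := hx2
    refine ⟨Nbhd κ (resT κ x (max s1.1 s2.1)), ⟨_, rfl⟩, mem_Nbhd_resT _ _, ?_⟩
    intro z hz
    constructor
    · have := Nbhd_anti x (le_max_left s1.1 s2.1) hz
      rwa [h1] at this
    · have := Nbhd_anti x (le_max_right s1.1 s2.1) hz
      rwa [h2] at this
  · apply Set.eq_univ_of_forall
    intro x
    obtain ⟨γ⟩ := hne
    exact ⟨Nbhd κ (resT κ x γ), ⟨_, rfl⟩, mem_Nbhd_resT _ _⟩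

lemma exists_basic_subset (hne : Nonempty (K κ)) {U : Set (K κ → K κ)}
    (hU : @IsOpen _ (baire κ) U) {y : K κ → K κ} (hy : y ∈ U) (β : K κ) :
    ∃ γ : K κ, β ≤ γ ∧ Nbhd κ (resT κ y γ) ⊆ U := by
  letI : TopologicalSpace (K κ → K κ) := baire κ
  obtain ⟨V, ⟨s, rfl⟩, hyV, hVU⟩ :=
    (isBasis_Nbhd hne).exists_subset_of_mem_open hy hU
  have h1 : resT κ y s.1 = s := hyV
  refine ⟨max β s.1, le_max_left _ _, ?_⟩
  refine (Nbhd_anti y (le_max_right β s.1)).trans ?_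
  rw [h1]
  exact hVU

end Helpers
section CardHelpers

lemma K_nonempty : Nonempty (K (aleph 1 : Cardinal.{u})) := by
  rw [← Cardinal.mk_ne_zero_iff, Cardinal.mk_ord_toType]
  exact (aleph0_pos.trans_le (Cardinal.aleph0_le_aleph 1)).ne'

lemma exists_ub_omega (g : ℕ → K (aleph 1 : Cardinal.{u})) :
    ∃ β : K (aleph 1 : Cardinal.{u}), ∀ n, g n < β := by
  set e := (Ordinal.ToType.mk (o := (aleph 1 : Cardinal.{u}).ord)) with he
  have h1 : ∀ n, ((e.symm (g n) : Set.Iio (aleph 1 : Cardinal.{u}).ord) : Ordinal) < (aleph 1 : Cardinal.{u}).ord := fun n => (e.symm (g n)).2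
  have hcof : Cardinal.lift.{u, 0} #ℕ < (aleph 1 : Cardinal.{u}).ord.cof := by
    rw [Cardinal.isRegular_aleph_one.cof_eq, Cardinal.mk_nat, Cardinal.lift_aleph0]
    exact Cardinal.aleph0_lt_aleph_one
  have h2 : Ordinal.lsub (fun n => ((e.symm (g n) : Set.Iio (aleph 1 : Cardinal.{u}).ord) : Ordinal)) < (aleph 1 : Cardinal.{u}).ord :=
    Ordinal.lsub_lt_ord_lift hcof h1
  refine ⟨e ⟨_, h2⟩, fun n => ?_⟩
  have key : e.symm (g n) < (⟨_, h2⟩ : Set.Iio (aleph 1 : Cardinal.{u}).ord) := by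
    rw [← Subtype.coe_lt_coe]
    exact Ordinal.lt_lsub _ n
  calc g n = e (e.symm (g n)) := (e.apply_symm_apply _).symm
    _ < _ := e.lt_iff_lt.mpr key

lemma exists_gt_elt (α : K (aleph 1 : Cardinal.{u})) : ∃ β, α < β :=
  (exists_ub_omega fun _ => α).imp fun β h => h 0

lemma mk_lt_aleph_one_iff {c : Cardinal.{u}} (h : c < aleph 1) : c ≤ ℵ₀ := by
  rwa [← Cardinal.succ_aleph0, Order.lt_succ_iff] at h

lemma mk_preFun_le (hCH : (2 : Cardinal.{u}) ^ ℵ₀ = aleph 1) :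
    #(PreFun (aleph 1 : Cardinal.{u})) ≤ aleph 1 := by
  have hK : #(K (aleph 1 : Cardinal.{u})) = aleph 1 := Cardinal.mk_ord_toType _
  have hexp : ∀ α : K (aleph 1 : Cardinal.{u}),
      #({β : K (aleph 1 : Cardinal.{u}) // β < α} → K (aleph 1 : Cardinal.{u})) ≤ aleph 1 := by
    intro α
    rw [← Cardinal.power_def]
    have h1 : #{β : K (aleph 1 : Cardinal.{u}) // β < α} ≤ ℵ₀ :=
      mk_lt_aleph_one_iff (Cardinal.mk_Iio_toType_ord_lt α)
    calc #(K (aleph 1 : Cardinal.{u})) ^ #{β : K (aleph 1 : Cardinal.{u}) // β < α}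
        ≤ (aleph 1) ^ (ℵ₀ : Cardinal.{u}) := by
          rw [hK]
          exact Cardinal.power_le_power_left
            ((aleph0_pos.trans_le (Cardinal.aleph0_le_aleph 1)).ne') h1
      _ = ((2 : Cardinal.{u}) ^ (ℵ₀ : Cardinal.{u})) ^ (ℵ₀ : Cardinal.{u}) := by rw [hCH]
      _ = (2 : Cardinal.{u}) ^ ((ℵ₀ : Cardinal.{u}) * ℵ₀) := (Cardinal.power_mul).symm
      _ = aleph 1 := by rw [Cardinal.aleph0_mul_aleph0, hCH]
  calc #(PreFun (aleph 1 : Cardinal.{u}))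
      = Cardinal.sum (fun α : K (aleph 1 : Cardinal.{u}) =>
        #({β : K (aleph 1 : Cardinal.{u}) // β < α} → K (aleph 1 : Cardinal.{u}))) :=
        Cardinal.mk_sigma _
    _ ≤ Cardinal.sum (fun _ : K (aleph 1 : Cardinal.{u}) => (aleph 1 : Cardinal.{u})) :=
        Cardinal.sum_le_sum _ _ hexp
    _ = #(K (aleph 1 : Cardinal.{u})) * aleph 1 := Cardinal.sum_const' _ _
    _ = aleph 1 := by rw [hK, Cardinal.mul_eq_self (Cardinal.aleph0_le_aleph 1)]

lemma exists_big_piece {α ι : Type u} (hι : #ι ≤ aleph 1) {B : Set α} {A : ι → Set α}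
    (hB : Order.succ (aleph 1 : Cardinal.{u}) ≤ #B) (hcov : B ⊆ ⋃ i, A i) :
    ∃ i, Order.succ (aleph 1 : Cardinal.{u}) ≤ #(↥(B ∩ A i)) := by
  by_contra hcon
  push_neg at hcon
  have h' : ∀ i, #(↥(B ∩ A i)) ≤ aleph 1 := fun i => Order.lt_succ_iff.mp (hcon i)
  have hsub : B ⊆ ⋃ i, (B ∩ A i) := fun x hx => by
    obtain ⟨V, ⟨i, rfl⟩, hxV⟩ := hcov hx
    exact Set.mem_iUnion.mpr ⟨i, hx, hxV⟩
  have hBle : #B ≤ aleph 1 := by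
    rcases isEmpty_or_nonempty ι with hemp | hnon
    · have : B ⊆ ∅ := by
        refine hsub.trans ?_
        simp [Set.iUnion_of_empty]
      have : #B ≤ #(∅ : Set α) := Cardinal.mk_le_mk_of_subset this
      simpa using this.trans (by simp)
    · calc #B ≤ #(⋃ i, (B ∩ A i) : Set α) := Cardinal.mk_le_mk_of_subset hsub
        _ ≤ #ι * ⨆ i, #(↥(B ∩ A i)) := Cardinal.mk_iUnion_le _
        _ ≤ (aleph 1) * (aleph 1) := mul_le_mul' hι (ciSup_le' h')
        _ = aleph 1 := Cardinal.mul_eq_self (Cardinal.aleph0_le_aleph 1)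
  exact absurd (hB.trans hBle) (by simp [Order.succ_le_iff])

lemma big_nonempty {α : Type u} {B : Set α}
    (hB : Order.succ (aleph 1 : Cardinal.{u}) ≤ #B) : B.Nonempty := by
  rw [← Set.nonempty_coe_sort, ← Cardinal.mk_ne_zero_iff]
  intro h0
  rw [h0] at hB
  exact (show (0 : Cardinal.{u}) ≤ _ from zero_le).not_gt (Order.succ_le_iff.mp hB)

end CardHelpers

section CHUniv
universe v w
lemma CH_univ (h : (2 : Cardinal.{v}) ^ ℵ₀ = aleph 1) : (2 : Cardinal.{w}) ^ ℵ₀ = aleph 1 := by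
  have h1 : Cardinal.lift.{w} ((2 : Cardinal.{v}) ^ ℵ₀) = Cardinal.lift.{w} (aleph 1) :=
    congrArg _ h
  rw [Cardinal.lift_power, Cardinal.lift_aleph0, Cardinal.lift_aleph, Ordinal.lift_one] at h1
  have h2 : Cardinal.lift.{v} ((2 : Cardinal.{w}) ^ ℵ₀) = Cardinal.lift.{v} (aleph 1) := by
    rw [Cardinal.lift_power, Cardinal.lift_aleph0, Cardinal.lift_aleph, Ordinal.lift_one]
    simp only [Cardinal.lift_ofNat] at h1 ⊢
    exact h1
  exact Cardinal.lift_injective h2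
end CHUniv
section MainSteps


variable {F : (K (aleph 1 : Cardinal.{u}) → K (aleph 1 : Cardinal.{u})) → (K (aleph 1 : Cardinal.{u}) → K (aleph 1 : Cardinal.{u}))}

lemma pre_step (hCH : (2 : Cardinal.{u}) ^ ℵ₀ = aleph 1)
    (hF : @Continuous _ _ (baire (aleph 1 : Cardinal.{u})) (baire (aleph 1 : Cardinal.{u})) F)
    {s t' : PreFun (aleph 1 : Cardinal.{u})}
    (hbig : Order.succ (aleph 1 : Cardinal.{u}) ≤ #(↥(F '' Nbhd (aleph 1 : Cardinal.{u}) s ∩ Nbhd (aleph 1 : Cardinal.{u}) t'))) :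
    ∃ r : PreFun (aleph 1 : Cardinal.{u}), sleq s r ∧ F '' Nbhd (aleph 1 : Cardinal.{u}) r ⊆ Nbhd (aleph 1 : Cardinal.{u}) t' ∧
      Order.succ (aleph 1 : Cardinal.{u}) ≤ #(↥(F '' Nbhd (aleph 1 : Cardinal.{u}) r)) := by
  letI : TopologicalSpace (K (aleph 1 : Cardinal.{u}) → K (aleph 1 : Cardinal.{u})) := baire (aleph 1 : Cardinal.{u})
  set W : Set (K (aleph 1 : Cardinal.{u}) → K (aleph 1 : Cardinal.{u})) := Nbhd (aleph 1 : Cardinal.{u}) s ∩ F ⁻¹' (Nbhd (aleph 1 : Cardinal.{u}) t') with hW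
  have hWopen : IsOpen W := (isOpen_Nbhd s).inter ((isOpen_Nbhd t').preimage hF)
  have hcov : F '' Nbhd (aleph 1 : Cardinal.{u}) s ∩ Nbhd (aleph 1 : Cardinal.{u}) t' ⊆
      ⋃ r : {r : PreFun (aleph 1 : Cardinal.{u}) // sleq s r ∧ Nbhd (aleph 1 : Cardinal.{u}) r ⊆ W}, F '' Nbhd (aleph 1 : Cardinal.{u}) r.1 := by
    rintro b ⟨⟨y, hy, rfl⟩, hbt⟩
    have hyW : y ∈ W := ⟨hy, hbt⟩
    obtain ⟨γ, hγ, hsub⟩ := exists_basic_subset K_nonempty hWopen hyW s.1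
    refine Set.mem_iUnion.mpr ⟨⟨resT (aleph 1 : Cardinal.{u}) y γ, sleq_resT hy hγ, hsub⟩, ?_⟩
    exact ⟨y, mem_Nbhd_resT y γ, rfl⟩
  obtain ⟨r, hr⟩ := exists_big_piece ((Cardinal.mk_subtype_le _).trans (mk_preFun_le hCH))
    hbig hcov
  refine ⟨r.1, r.2.1, ?_, ?_⟩
  · exact (Set.image_mono (f := F) (r.2.2.trans Set.inter_subset_right)).trans
      (Set.image_preimage_subset F _)
  · exact hr.trans (Cardinal.mk_le_mk_of_subset Set.inter_subset_right)

lemma level_step (hCH : (2 : Cardinal.{u}) ^ ℵ₀ = aleph 1)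
    {T : Set (PreFun (aleph 1 : Cardinal.{u}))}
    (hlev : ∀ α : K (aleph 1 : Cardinal.{u}), #(level (aleph 1 : Cardinal.{u}) T α) < (aleph 1 : Cardinal.{u}))
    (hF : @Continuous _ _ (baire (aleph 1 : Cardinal.{u})) (baire (aleph 1 : Cardinal.{u})) F)
    (hrange : ∀ y, F y ∈ branches (aleph 1 : Cardinal.{u}) T)
    {s : PreFun (aleph 1 : Cardinal.{u})} (hbig : Order.succ (aleph 1 : Cardinal.{u}) ≤ #(↥(F '' Nbhd (aleph 1 : Cardinal.{u}) s))) (δ : K (aleph 1 : Cardinal.{u})) :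
    ∃ r t' : PreFun (aleph 1 : Cardinal.{u}), sleq s r ∧ t'.1 = δ ∧ F '' Nbhd (aleph 1 : Cardinal.{u}) r ⊆ Nbhd (aleph 1 : Cardinal.{u}) t' ∧
      Order.succ (aleph 1 : Cardinal.{u}) ≤ #(↥(F '' Nbhd (aleph 1 : Cardinal.{u}) r)) := by
  have hcov : F '' Nbhd (aleph 1 : Cardinal.{u}) s ⊆ ⋃ t' : ↥(level (aleph 1 : Cardinal.{u}) T δ), Nbhd (aleph 1 : Cardinal.{u}) t'.1 := by
    rintro b ⟨y, hy, rfl⟩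
    have hbr : resT (aleph 1 : Cardinal.{u}) (F y) δ ∈ T := hrange y δ
    exact Set.mem_iUnion.mpr ⟨⟨resT (aleph 1 : Cardinal.{u}) (F y) δ, hbr, rfl⟩, mem_Nbhd_resT _ _⟩
  obtain ⟨t', ht'⟩ := exists_big_piece (ι := ↥(level (aleph 1 : Cardinal.{u}) T δ))
    (A := fun t' => Nbhd (aleph 1 : Cardinal.{u}) t'.1) (hlev δ).le hbig hcov
  obtain ⟨r, hsr, hsub, hbig'⟩ := pre_step hCH hF ht'
  exact ⟨r, t'.1, hsr, t'.2.2, hsub, hbig'⟩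

lemma split_step (hCH : (2 : Cardinal.{u}) ^ ℵ₀ = aleph 1)
    {B : Set (K (aleph 1 : Cardinal.{u}) → K (aleph 1 : Cardinal.{u}))}
    (hbig : Order.succ (aleph 1 : Cardinal.{u}) ≤ #(↥B)) (ϑ : K (aleph 1 : Cardinal.{u})) :
    ∃ (δ : K (aleph 1 : Cardinal.{u})) (t₀ t₁ : PreFun (aleph 1 : Cardinal.{u})),
      ϑ < δ ∧ t₀.1 = δ ∧ t₁.1 = δ ∧ t₀ ≠ t₁ ∧
      Order.succ (aleph 1 : Cardinal.{u}) ≤ #(↥(B ∩ Nbhd (aleph 1 : Cardinal.{u}) t₀)) ∧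
      Order.succ (aleph 1 : Cardinal.{u}) ≤ #(↥(B ∩ Nbhd (aleph 1 : Cardinal.{u}) t₁)) := by
  classical
  have hBadle : #(↥{b | b ∈ B ∧ ∃ δ : K (aleph 1 : Cardinal.{u}),
      #(↥(B ∩ Nbhd (aleph 1 : Cardinal.{u}) (resT (aleph 1 : Cardinal.{u}) b δ))) ≤ aleph 1})
      ≤ aleph 1 := by
    have hsub : {b | b ∈ B ∧ ∃ δ : K (aleph 1 : Cardinal.{u}),
        #(↥(B ∩ Nbhd (aleph 1 : Cardinal.{u}) (resT (aleph 1 : Cardinal.{u}) b δ))) ≤ aleph 1}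
        ⊆ ⋃ r : {r : PreFun (aleph 1 : Cardinal.{u}) //
            #(↥(B ∩ Nbhd (aleph 1 : Cardinal.{u}) r)) ≤ aleph 1},
          (B ∩ Nbhd (aleph 1 : Cardinal.{u}) r.1) := by
      rintro b ⟨hbB, δ, hδ⟩
      exact Set.mem_iUnion.mpr ⟨⟨resT (aleph 1 : Cardinal.{u}) b δ, hδ⟩, hbB, mem_Nbhd_resT _ _⟩
    refine (Cardinal.mk_le_mk_of_subset hsub).trans ?_
    refine (Cardinal.mk_iUnion_le _).trans ?_
    have hsup : ⨆ r : {r : PreFun (aleph 1 : Cardinal.{u}) //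
        #(↥(B ∩ Nbhd (aleph 1 : Cardinal.{u}) r)) ≤ aleph 1},
        #(↥(B ∩ Nbhd (aleph 1 : Cardinal.{u}) r.1)) ≤ aleph 1 := by
      rcases isEmpty_or_nonempty {r : PreFun (aleph 1 : Cardinal.{u}) //
          #(↥(B ∩ Nbhd (aleph 1 : Cardinal.{u}) r)) ≤ aleph 1} with hemp | hnon
      · rw [ciSup_of_empty]
        exact bot_le
      · exact ciSup_le' fun r => r.2
    refine le_trans (mul_le_mul' ((Cardinal.mk_subtype_le _).trans (mk_preFun_le hCH)) hsup) ?_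
    exact (Cardinal.mul_eq_self (Cardinal.aleph0_le_aleph 1)).le
  have hgood : aleph 1 < #(↥(B \ {b | b ∈ B ∧ ∃ δ : K (aleph 1 : Cardinal.{u}),
      #(↥(B ∩ Nbhd (aleph 1 : Cardinal.{u}) (resT (aleph 1 : Cardinal.{u}) b δ))) ≤ aleph 1})) := by
    by_contra hcon
    push_neg at hcon
    have h1 : #(↥B) ≤ aleph 1 := by
      refine (Cardinal.mk_le_mk_of_subset (Set.subset_diff_union B
        {b | b ∈ B ∧ ∃ δ : K (aleph 1 : Cardinal.{u}),
          #(↥(B ∩ Nbhd (aleph 1 : Cardinal.{u}) (resT (aleph 1 : Cardinal.{u}) b δ))) ≤ aleph 1})).trans ?_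
      refine (Cardinal.mk_union_le _ _).trans ?_
      refine (add_le_add hcon hBadle).trans ?_
      exact (Cardinal.add_eq_self (Cardinal.aleph0_le_aleph 1)).le
    exact (Order.succ_le_iff.mp hbig).not_ge h1
  have hnontriv : (B \ {b | b ∈ B ∧ ∃ δ : K (aleph 1 : Cardinal.{u}),
      #(↥(B ∩ Nbhd (aleph 1 : Cardinal.{u}) (resT (aleph 1 : Cardinal.{u}) b δ))) ≤ aleph 1}).Nontrivial := by
    by_contra hcon
    rw [Set.not_nontrivial_iff] at hcon
    exact hgood.not_ge ((Cardinal.mk_le_one_iff_set_subsingleton.mpr hcon).trans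
      (Cardinal.one_le_iff_ne_zero.mpr (aleph0_pos.trans_le (Cardinal.aleph0_le_aleph 1)).ne'))
  obtain ⟨b, hb, b', hb', hbb'⟩ := hnontriv
  have hdiff : ∃ α : K (aleph 1 : Cardinal.{u}), b α ≠ b' α := by
    by_contra hcon
    push_neg at hcon
    exact hbb' (funext hcon)
  obtain ⟨α, hα⟩ := hdiff
  obtain ⟨δ₀, hδ₀⟩ := exists_gt_elt α
  obtain ⟨δ₁, hδ₁⟩ := exists_gt_elt ϑ
  have hbBig : ∀ δ : K (aleph 1 : Cardinal.{u}),
      aleph 1 < #(↥(B ∩ Nbhd (aleph 1 : Cardinal.{u}) (resT (aleph 1 : Cardinal.{u}) b δ))) :=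
    fun δ => not_le.mp fun hle => hb.2 ⟨hb.1, δ, hle⟩
  have hb'Big : ∀ δ : K (aleph 1 : Cardinal.{u}),
      aleph 1 < #(↥(B ∩ Nbhd (aleph 1 : Cardinal.{u}) (resT (aleph 1 : Cardinal.{u}) b' δ))) :=
    fun δ => not_le.mp fun hle => hb'.2 ⟨hb'.1, δ, hle⟩
  refine ⟨max δ₀ δ₁, resT (aleph 1 : Cardinal.{u}) b (max δ₀ δ₁),
    resT (aleph 1 : Cardinal.{u}) b' (max δ₀ δ₁),
    hδ₁.trans_le (le_max_right _ _), rfl, rfl, ?_,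
    Order.succ_le_iff.mpr (hbBig _), Order.succ_le_iff.mpr (hb'Big _)⟩
  intro he
  exact hα (resT_val_eq he (hδ₀.trans_le (le_max_left _ _)))

end MainSteps
/-- Assume `CH`.  If `T` is an `ω₁`-Kurepa subtree of `^{<ω₁}ω₁`,
then `[T]` is not a continuous image of `^{ω₁}ω₁`. -/
theorem kurepa_not_continuous_image_of_CH
    (hCH : (2 : Cardinal.{u}) ^ ℵ₀ = aleph 1)
    (T : Set (PreFun (aleph 1))) (hT : IsKurepa (aleph 1) T) :
    ¬ IsContImage (aleph 1) (branches (aleph 1) T) := by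
  classical
  obtain ⟨hsubtree, hlev', hbr⟩ := hT
  have hlev : ∀ α : K (aleph 1 : Cardinal), #(level (aleph 1) T α) < aleph 1 :=
    fun α => (hlev' α).2
  rintro ⟨f, hf, hsurj⟩
  set F : (K (aleph 1 : Cardinal) → K (aleph 1 : Cardinal)) →
      (K (aleph 1 : Cardinal) → K (aleph 1 : Cardinal)) :=
    fun y => ((f y : ↥(branches (aleph 1) T)) : K (aleph 1 : Cardinal) → K (aleph 1 : Cardinal))
    with hFdef
  have hFcont : @Continuous _ _ (baire (aleph 1)) (baire (aleph 1)) F := by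
    exact @Continuous.subtype_val _ _ (baire (aleph 1)) (baire (aleph 1)) _ f hf
  have hrange : ∀ y, F y ∈ branches (aleph 1) T := fun y => (f y).2
  -- Base step
  have hcov0 : branches (aleph 1) T ⊆
      ⋃ r : PreFun (aleph 1 : Cardinal), F '' Nbhd (aleph 1) r := by
    intro b hb
    obtain ⟨y, hy⟩ := hsurj ⟨b, hb⟩
    obtain ⟨γ⟩ := K_nonempty
    refine Set.mem_iUnion.mpr ⟨resT (aleph 1) y γ, y, mem_Nbhd_resT y γ, ?_⟩
    rw [hFdef]
    exact congrArg Subtype.val hy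
  obtain ⟨r0, hr0⟩ := exists_big_piece (mk_preFun_le (CH_univ hCH)) hbr hcov0
  have hbig0 : Order.succ (aleph 1 : Cardinal) ≤ #(↥(F '' Nbhd (aleph 1) r0)) :=
    hr0.trans (Cardinal.mk_le_mk_of_subset Set.inter_subset_right)
  obtain ⟨γ0⟩ := K_nonempty
  obtain ⟨s0, t0, -, -, hsub0, hbig0'⟩ := level_step (CH_univ hCH) hlev hFcont hrange hbig0 γ0
  -- Inductive step
  have stepex : ∀ (n : ℕ) (Sf Tf : (Fin n → Bool) → PreFun (aleph 1 : Cardinal)),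
      (∀ σ, F '' Nbhd (aleph 1) (Sf σ) ⊆ Nbhd (aleph 1) (Tf σ)) →
      (∀ σ, Order.succ (aleph 1 : Cardinal) ≤ #(↥(F '' Nbhd (aleph 1) (Sf σ)))) →
      ∃ d' : ((Fin (n+1) → Bool) → PreFun (aleph 1 : Cardinal)) ×
          ((Fin (n+1) → Bool) → PreFun (aleph 1 : Cardinal)),
        ((∀ σ', F '' Nbhd (aleph 1) (d'.1 σ') ⊆ Nbhd (aleph 1) (d'.2 σ')) ∧
         (∀ σ', Order.succ (aleph 1 : Cardinal) ≤ #(↥(F '' Nbhd (aleph 1) (d'.1 σ'))))) ∧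
        (∀ σ' τ', (d'.2 σ').1 = (d'.2 τ').1) ∧
        (∀ σ', sleq (Sf (Fin.init σ')) (d'.1 σ')) ∧
        (∀ σ σ', (Tf σ).1 < (d'.2 σ').1) ∧
        (∀ σ' τ', Fin.init σ' = Fin.init τ' → σ' ≠ τ' → d'.2 σ' ≠ d'.2 τ') := by
    intro n Sf Tf hsub hbig
    have hsplit : ∀ σ : Fin n → Bool,
        ∃ (δ : K (aleph 1 : Cardinal)) (t₀ t₁ : PreFun (aleph 1 : Cardinal)),
          (Tf σ).1 < δ ∧ t₀.1 = δ ∧ t₁.1 = δ ∧ t₀ ≠ t₁ ∧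
          Order.succ (aleph 1 : Cardinal) ≤
            #(↥(F '' Nbhd (aleph 1) (Sf σ) ∩ Nbhd (aleph 1) t₀)) ∧
          Order.succ (aleph 1 : Cardinal) ≤
            #(↥(F '' Nbhd (aleph 1) (Sf σ) ∩ Nbhd (aleph 1) t₁)) :=
      fun σ => split_step (CH_univ hCH) (hbig σ) (Tf σ).1
    choose δ t₀ t₁ hδ ht₀ ht₁ htne hbigc₀ hbigc₁ using hsplit
    have hpre : ∀ (σ : Fin n → Bool) (i : Bool),
        ∃ r : PreFun (aleph 1 : Cardinal), sleq (Sf σ) r ∧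
          F '' Nbhd (aleph 1) r ⊆ Nbhd (aleph 1) (cond i (t₁ σ) (t₀ σ)) ∧
          Order.succ (aleph 1 : Cardinal) ≤ #(↥(F '' Nbhd (aleph 1) r)) := by
      intro σ i
      cases i
      · exact pre_step (CH_univ hCH) hFcont (hbigc₀ σ)
      · exact pre_step (CH_univ hCH) hFcont (hbigc₁ σ)
    choose r hsr hrsub hrbig using hpre
    have hFNE : Nonempty (Fin n → Bool) := ⟨fun _ => false⟩
    set l' : K (aleph 1 : Cardinal) :=
      Finset.univ.sup' Finset.univ_nonempty δ with hl'
    have hδle : ∀ σ, δ σ ≤ l' := fun σ => Finset.le_sup' δ (Finset.mem_univ σ)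
    have hlevstep : ∀ (σ : Fin n → Bool) (i : Bool),
        ∃ s' t' : PreFun (aleph 1 : Cardinal), sleq (r σ i) s' ∧ t'.1 = l' ∧
          F '' Nbhd (aleph 1) s' ⊆ Nbhd (aleph 1) t' ∧
          Order.succ (aleph 1 : Cardinal) ≤ #(↥(F '' Nbhd (aleph 1) s')) :=
      fun σ i => level_step (CH_univ hCH) hlev hFcont hrange (hrbig σ i) l'
    choose s' t' hrs' ht'l hsub' hbig' using hlevstep
    have hclaim : ∀ (σ : Fin n → Bool) (i j : Bool), i ≠ j → t' σ i ≠ t' σ j := by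
      intro σ i j hij heq
      have hmem : ∀ k : Bool, ∃ b, b ∈ F '' Nbhd (aleph 1) (s' σ k) :=
        fun k => big_nonempty (hbig' σ k)
      obtain ⟨b, hbm⟩ := hmem i
      obtain ⟨b', hbm'⟩ := hmem j
      have hbt' : b ∈ Nbhd (aleph 1) (t' σ i) := hsub' σ i hbm
      have hbti : b ∈ Nbhd (aleph 1) (cond i (t₁ σ) (t₀ σ)) :=
        hrsub σ i (Set.image_mono (f := F) (Nbhd_sleq (hrs' σ i)) hbm)
      have hb't' : b' ∈ Nbhd (aleph 1) (t' σ j) := hsub' σ j hbm'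
      have hb'tj : b' ∈ Nbhd (aleph 1) (cond j (t₁ σ) (t₀ σ)) :=
        hrsub σ j (Set.image_mono (f := F) (Nbhd_sleq (hrs' σ j)) hbm')
      have hleni : (cond i (t₁ σ) (t₀ σ)).1 = δ σ := by cases i
                                                        · exact ht₀ σ
                                                        · exact ht₁ σ
      have hlenj : (cond j (t₁ σ) (t₀ σ)).1 = δ σ := by cases j
                                                        · exact ht₀ σ
                                                        · exact ht₁ σ
      have e2 : cut (aleph 1) (t' σ j) (δ σ) = cond j (t₁ σ) (t₀ σ) := by
        have h := cut_eq_of_mem hb'tj hb't' (by rw [hlenj, ht'l]; exact hδle σ)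
        rwa [hlenj] at h
      have e1 : cut (aleph 1) (t' σ j) (δ σ) = cond i (t₁ σ) (t₀ σ) := by
        have h := cut_eq_of_mem hbti hbt' (by rw [hleni, ht'l]; exact hδle σ)
        rwa [hleni, heq] at h
      have heqc : cond i (t₁ σ) (t₀ σ) = cond j (t₁ σ) (t₀ σ) := e1.symm.trans e2
      cases i <;> cases j
      · exact hij rfl
      · exact htne σ (by simpa using heqc)
      · exact htne σ (by simpa using heqc.symm)
      · exact hij rfl
    refine ⟨(fun σ' => s' (Fin.init σ') (σ' (Fin.last n)),
             fun σ' => t' (Fin.init σ') (σ' (Fin.last n))), ⟨?_, ?_⟩, ?_, ?_, ?_, ?_⟩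
    · intro σ'
      exact hsub' _ _
    · intro σ'
      exact hbig' _ _
    · intro σ' τ'
      rw [ht'l, ht'l]
    · intro σ'
      exact sleq_trans (hsr _ _) (hrs' _ _)
    · intro σ σ'
      rw [ht'l]
      exact (hδ σ).trans_le (hδle σ)
    · intro σ' τ' hinit hne he
      have hlast : σ' (Fin.last n) ≠ τ' (Fin.last n) := by
        intro hl
        apply hne
        rw [← Fin.snoc_init_self σ', ← Fin.snoc_init_self τ', hinit, hl]
      dsimp only at he
      rw [← hinit] at he
      exact hclaim (Fin.init σ') _ _ hlast he
  -- the recursively constructed sequence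
  let Q : ℕ → Type _ := fun n =>
    {d : ((Fin n → Bool) → PreFun (aleph 1 : Cardinal)) ×
        ((Fin n → Bool) → PreFun (aleph 1 : Cardinal)) //
      (∀ σ, F '' Nbhd (aleph 1) (d.1 σ) ⊆ Nbhd (aleph 1) (d.2 σ)) ∧
      (∀ σ, Order.succ (aleph 1 : Cardinal) ≤ #(↥(F '' Nbhd (aleph 1) (d.1 σ))))}
  let q0 : Q 0 := ⟨(fun _ => s0, fun _ => t0), fun _ => hsub0, fun _ => hbig0'⟩
  let nxt : ∀ n, Q n → Q (n + 1) := fun n q =>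
    ⟨(stepex n q.1.1 q.1.2 q.2.1 q.2.2).choose,
     (stepex n q.1.1 q.1.2 q.2.1 q.2.2).choose_spec.1⟩
  let seq : ∀ n, Q n := fun n => Nat.rec q0 nxt n
  have hrel : ∀ n,
      (∀ σ' τ', ((seq (n+1)).1.2 σ').1 = ((seq (n+1)).1.2 τ').1) ∧
      (∀ σ', sleq ((seq n).1.1 (Fin.init σ')) ((seq (n+1)).1.1 σ')) ∧
      (∀ σ σ', ((seq n).1.2 σ).1 < ((seq (n+1)).1.2 σ').1) ∧
      (∀ σ' τ', Fin.init σ' = Fin.init τ' → σ' ≠ τ' →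
        (seq (n+1)).1.2 σ' ≠ (seq (n+1)).1.2 τ') := fun n =>
    (stepex n (seq n).1.1 (seq n).1.2 (seq n).2.1 (seq n).2.2).choose_spec.2
  have hsubn : ∀ n σ, F '' Nbhd (aleph 1) ((seq n).1.1 σ) ⊆ Nbhd (aleph 1) ((seq n).1.2 σ) :=
    fun n => (seq n).2.1
  -- binary sequences
  let σx : (ℕ → Bool) → ∀ n, Fin n → Bool := fun x n i => x i
  have hchain : ∀ (x : ℕ → Bool) (n : ℕ),
      sleq ((seq n).1.1 (σx x n)) ((seq (n+1)).1.1 (σx x (n+1))) := by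
    intro x n
    have h := (hrel n).2.1 (σx x (n+1))
    have hi : Fin.init (σx x (n+1)) = σx x n := funext fun i => rfl
    rwa [hi] at h
  have hmono : ∀ (x : ℕ → Bool) (m n : ℕ), m ≤ n →
      sleq ((seq m).1.1 (σx x m)) ((seq n).1.1 (σx x n)) := by
    intro x m n h
    induction h with
    | refl => exact sleq_refl _
    | step h2 ih => exact sleq_trans ih (hchain x _)
  -- the diagonal points
  have hy : ∀ x : ℕ → Bool, ∃ y : K (aleph 1 : Cardinal) → K (aleph 1 : Cardinal),
      ∀ n, y ∈ Nbhd (aleph 1) ((seq n).1.1 (σx x n)) := by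
    intro x
    refine ⟨fun β => if h : ∃ n, β < ((seq n).1.1 (σx x n)).1 then
        ((seq (Nat.find h)).1.1 (σx x (Nat.find h))).2 ⟨β, Nat.find_spec h⟩ else β, fun n => ?_⟩
    show resT (aleph 1) _ ((seq n).1.1 (σx x n)).1 = (seq n).1.1 (σx x n)
    refine prefun_ext rfl ?_
    intro β hs ht
    show (if h : ∃ m, β < ((seq m).1.1 (σx x m)).1 then
        ((seq (Nat.find h)).1.1 (σx x (Nat.find h))).2 ⟨β, Nat.find_spec h⟩ else β)
      = ((seq n).1.1 (σx x n)).2 ⟨β, ht⟩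
    have hex : ∃ m, β < ((seq m).1.1 (σx x m)).1 := ⟨n, ht⟩
    rw [dif_pos hex]
    rcases le_total (Nat.find hex) n with hmn | hnm
    · exact val_of_cut_eq (hmono x _ _ hmn).2 _ _
    · exact (val_of_cut_eq (hmono x _ _ hnm).2 _ _).symm
  choose yx hyx using hy
  -- uniform lengths
  let ln : ℕ → K (aleph 1 : Cardinal) := fun n => ((seq n).1.2 (fun _ => false)).1
  have hlen : ∀ n σ, ((seq n).1.2 σ).1 = ln n := by
    intro n σ
    cases n with
    | zero =>
      have hσ : σ = (fun _ => false) := funext fun i => i.elim0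
      rw [hσ]
    | succ m => exact (hrel m).1 σ _
  obtain ⟨Λ, hΛ⟩ := exists_ub_omega ln
  have hFy : ∀ (x : ℕ → Bool) (n : ℕ), F (yx x) ∈ Nbhd (aleph 1) ((seq n).1.2 (σx x n)) :=
    fun x n => hsubn n _ ⟨yx x, hyx x n, rfl⟩
  have hval : ∀ (x : ℕ → Bool) (n : ℕ),
      resT (aleph 1) (F (yx x)) (ln n) = (seq n).1.2 (σx x n) := by
    intro x n
    have h : resT (aleph 1) (F (yx x)) ((seq n).1.2 (σx x n)).1 = (seq n).1.2 (σx x n) :=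
      hFy x n
    rwa [hlen n (σx x n)] at h
  -- injectivity
  have hinj : ∀ x x' : ℕ → Bool, x ≠ x' →
      resT (aleph 1) (F (yx x)) Λ ≠ resT (aleph 1) (F (yx x')) Λ := by
    intro x x' hne
    have hd : ∃ n, x n ≠ x' n := by
      by_contra h
      push_neg at h
      exact hne (funext h)
    set n := Nat.find hd with hn
    have hinit_eq : Fin.init (σx x (n+1)) = Fin.init (σx x' (n+1)) := by
      funext i
      show x i.1 = x' i.1
      have := Nat.find_min hd i.2
      exact not_ne_iff.mp this
    have hlast_ne : σx x (n+1) (Fin.last n) ≠ σx x' (n+1) (Fin.last n) := Nat.find_spec hd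
    have hσne : σx x (n+1) ≠ σx x' (n+1) := fun h => hlast_ne (congrFun h _)
    have hTne := (hrel n).2.2.2 _ _ hinit_eq hσne
    intro he
    apply hTne
    rw [← hval x (n+1), ← hval x' (n+1)]
    exact resT_mono (hΛ (n+1)).le he
  -- the final counting contradiction
  have hmem : ∀ x : ℕ → Bool, resT (aleph 1) (F (yx x)) Λ ∈ level (aleph 1) T Λ :=
    fun x => ⟨hrange (yx x) Λ, rfl⟩
  have hembed : Nonempty ((ℕ → Bool) ↪ ↥(level (aleph 1) T Λ)) := by
    refine ⟨⟨fun x => ⟨resT (aleph 1) (F (yx x)) Λ, hmem x⟩, fun x x' he => ?_⟩⟩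
    by_contra hc
    exact hinj x x' hc (congrArg Subtype.val he)
  have hfin : aleph 1 ≤ #(level (aleph 1) T Λ) := by
    have hle := Cardinal.lift_mk_le'.mpr hembed
    rw [Cardinal.lift_uzero] at hle
    have h28 : #(ℕ → Bool) = (2 : Cardinal) ^ (ℵ₀ : Cardinal) := by
      rw [← Cardinal.mk_bool, ← Cardinal.mk_nat, Cardinal.power_def]
    rw [h28, Cardinal.lift_power, Cardinal.lift_aleph0] at hle
    simp only [Cardinal.lift_ofNat] at hle
    rwa [CH_univ hCH] at hle
  exact (hlev Λ).not_ge hfin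

end GBaire
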